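/- (Smooth Sylvester normalisation.) Let U ⊆ ℝ^d be an open neighbourhood of 0 and let B : U → Sym(m) be a smooth map into the symmetric m×m real matrices such that B(x) is invertible for every x ∈ U. Then there exist an open neighbourhood U' ⊆ U of 0 and a smooth map A : U' → GL(m, ℝ) such that A(x)^{−T} B(x) A(x)^{−1} = B(0) for all x ∈ U'; equivalently, B(x) = A(x)ᵀ B(0) A(x) for all x ∈ U'. -/

import Mathlib

open Matrix

section SmoothSylvesterAux

attribute [local instance] Matrix.linftyOpNormedAddCommGroup Matrix.linftyOpNormedRing
  Matrix.linftyOpNormedAlgebra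

variable {d m : ℕ}

/-- The identity linear equivalence between matrices and the pi type. -/
noncomputable def smoothSylvesterMatrixLE (m : ℕ) :
    Matrix (Fin m) (Fin m) ℝ ≃ₗ[ℝ] (Fin m → Fin m → ℝ) where
  toFun M := fun i j => M i j
  invFun f := Matrix.of f
  map_add' _ _ := rfl
  map_smul' _ _ := rfl
  left_inv _ := rfl
  right_inv _ := rfl

theorem smoothSylvester_contDiffOn_matrix {S : Set (Fin d → ℝ)}
    {B : (Fin d → ℝ) → Matrix (Fin m) (Fin m) ℝ}
    (h : ∀ i j, ContDiffOn ℝ (⊤ : ℕ∞) (fun x => B x i j) S) :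
    ContDiffOn ℝ (⊤ : ℕ∞) B S := by
  have hB : B = ((smoothSylvesterMatrixLE m).symm.toContinuousLinearEquiv :
      (Fin m → Fin m → ℝ) →L[ℝ] Matrix (Fin m) (Fin m) ℝ) ∘ (fun x i j => B x i j) := rfl
  rw [hB]
  exact (((smoothSylvesterMatrixLE m).symm.toContinuousLinearEquiv :
      (Fin m → Fin m → ℝ) →L[ℝ] Matrix (Fin m) (Fin m) ℝ)).contDiff.comp_contDiffOn
    (contDiffOn_pi.2 fun i => contDiffOn_pi.2 fun j => h i j)

theorem smoothSylvester_contDiffOn_entry {S : Set (Fin d → ℝ)}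
    {B : (Fin d → ℝ) → Matrix (Fin m) (Fin m) ℝ}
    (h : ContDiffOn ℝ (⊤ : ℕ∞) B S) (i j : Fin m) :
    ContDiffOn ℝ (⊤ : ℕ∞) (fun x => B x i j) S := by
  have : (fun x => B x i j) =
      (LinearMap.toContinuousLinearMap
        (((LinearMap.proj j).comp (LinearMap.proj i)).comp
          (smoothSylvesterMatrixLE m).toLinearMap)) ∘ B := rfl
  rw [this]
  exact (LinearMap.toContinuousLinearMap _).contDiff.comp_contDiffOn h

/-- A smooth local square root near the identity matrix, with local uniqueness. -/
theorem smoothSylvester_exists_sqrt (m : ℕ) :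
    ∃ (W S : Set (Matrix (Fin m) (Fin m) ℝ))
      (g : Matrix (Fin m) (Fin m) ℝ → Matrix (Fin m) (Fin m) ℝ),
      IsOpen W ∧ (1 : Matrix (Fin m) (Fin m) ℝ) ∈ W ∧
      IsOpen S ∧ (1 : Matrix (Fin m) (Fin m) ℝ) ∈ S ∧
      ContDiffOn ℝ (⊤ : ℕ∞) g W ∧ (∀ z ∈ W, g z ∈ S) ∧ (∀ z ∈ W, g z * g z = z) ∧
      (∀ y ∈ S, ∀ z ∈ W, y * y = z → y = g z) := by
  set E := Matrix (Fin m) (Fin m) ℝ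
  haveI : CompleteSpace E := FiniteDimensional.complete ℝ E
  set sq : E → E := fun N => N * N with hsq_def
  have hsq : ContDiff ℝ (⊤ : ℕ∞) sq := contDiff_id.mul contDiff_id
  -- derivative of sq at N
  set D : E → (E →L[ℝ] E) := fun N =>
    N • (ContinuousLinearMap.id ℝ E) + (ContinuousLinearMap.id ℝ E).smulRight N with hD_def
  have hD_apply : ∀ N H : E, D N H = N * H + H * N := by
    intro N H
    simp [hD_def, smul_eq_mul]
  have hD : ∀ N : E, HasFDerivAt sq (D N) N := by
    intro N
    exact (hasFDerivAt_id N).mul' (hasFDerivAt_id N)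
  have hDlin : IsLinearMap ℝ D := by
    constructor
    · intro N N'
      refine ContinuousLinearMap.ext fun H => ?_
      simp only [ContinuousLinearMap.add_apply, hD_apply, add_mul, mul_add]
      abel
    · intro c N
      refine ContinuousLinearMap.ext fun H => ?_
      simp only [ContinuousLinearMap.smul_apply, hD_apply, smul_add, mul_smul_comm,
        smul_mul_assoc]
  have hDcont : Continuous D := (IsLinearMap.mk' D hDlin).continuous_of_finiteDimensional
  have hVopen : IsOpen (D ⁻¹' Set.range ((↑) : (E ≃L[ℝ] E) → E →L[ℝ] E)) :=
    ContinuousLinearEquiv.isOpen.preimage hDcont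
  have h2 : ∀ H : E, D 1 ((2 : ℝ)⁻¹ • H) = H := by
    intro H
    rw [hD_apply, one_mul, mul_one, ← two_smul ℝ ((2:ℝ)⁻¹ • H), smul_smul]
    norm_num
  have h2' : ∀ H : E, (2 : ℝ)⁻¹ • D 1 H = H := by
    intro H
    rw [hD_apply, one_mul, mul_one, ← two_smul ℝ H, smul_smul]
    norm_num
  -- the partial homeomorph near 1
  set e1 : E ≃L[ℝ] E := ContinuousLinearEquiv.equivOfInverse (D 1)
    ((2 : ℝ)⁻¹ • ContinuousLinearMap.id ℝ E) h2' h2 with he1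
  have he1coe : (e1 : E →L[ℝ] E) = D 1 := by
    ext H; rfl
  have hD1 : D (1 : E) ∈ Set.range ((↑) : (E ≃L[ℝ] E) → E →L[ℝ] E) := ⟨e1, he1coe⟩
  have hF' : HasFDerivAt sq (e1 : E →L[ℝ] E) 1 := by rw [he1coe]; exact hD 1
  have hn1 : ((⊤ : ℕ∞) : WithTop ℕ∞) ≠ 0 := by simp
  set F := hsq.contDiffAt.toOpenPartialHomeomorph sq hF' hn1 with hF
  have hFcoe : (F : E → E) = sq :=
    ContDiffAt.toOpenPartialHomeomorph_coe hsq.contDiffAt hF' hn1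
  have h1src : (1 : E) ∈ F.source :=
    ContDiffAt.mem_toOpenPartialHomeomorph_source hsq.contDiffAt hF' hn1
  have hsq1 : sq (1 : E) = 1 := by simp [hsq_def]
  have h1tgt : (1 : E) ∈ F.target := by
    have := F.map_source h1src
    rwa [hFcoe, hsq1] at this
  set g : E → E := ⇑F.symm with hg_def
  have hgsq : ∀ z ∈ F.target, g z * g z = z := by
    intro z hz
    have := F.right_inv hz
    rwa [hFcoe] at this
  set W : Set E := F.target ∩ g ⁻¹' (D ⁻¹' Set.range ((↑) : (E ≃L[ℝ] E) → E →L[ℝ] E))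
    with hW_def
  have hWopen : IsOpen W :=
    F.continuousOn_invFun.isOpen_inter_preimage F.open_target hVopen
  have hg1 : g 1 = 1 := by
    have : F.symm (F 1) = 1 := F.left_inv h1src
    rwa [hFcoe, hsq1] at this
  have h1W : (1 : E) ∈ W := ⟨h1tgt, by
    simp only [Set.mem_preimage, hg1]
    exact hD1⟩
  refine ⟨W, F.source, g, hWopen, h1W, F.open_source, h1src, ?_, ?_, ?_, ?_⟩
  · -- smoothness of g on W
    intro z hz
    have hz1 : z ∈ F.target := hz.1
    obtain ⟨e, hecoe⟩ : ∃ e : E ≃L[ℝ] E, (e : E →L[ℝ] E) = D (g z) := hz.2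
    have hFz : HasFDerivAt (F : E → E) (e : E →L[ℝ] E) (F.symm z) := by
      rw [hFcoe, hecoe]; exact hD (g z)
    have := F.contDiffAt_symm hz1 hFz (by rw [hFcoe]; exact hsq.contDiffAt)
    exact this.contDiffWithinAt
  · exact fun z hz => F.map_target hz.1
  · exact fun z hz => hgsq z hz.1
  · intro y hy z hz hyz
    have h1 : (F : E → E) y = z := by rw [hFcoe]; exact hyz
    have h2 : (F : E → E) (g z) = z := by rw [hFcoe]; exact hgsq z hz.1
    exact F.injOn hy (F.map_target hz.1) (h1.trans h2.symm)

end SmoothSylvesterAux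

/-- smooth Sylvester normalisation: if `B : U → Sym(m)` is a smooth
family of invertible symmetric matrices on a neighbourhood `U` of `0 ∈ ℝ^d`, then on a
possibly smaller neighbourhood `U'` of `0` there is a smooth family of invertible
matrices `A(x)` with `B(x) = A(x)ᵀ B(0) A(x)` for all `x ∈ U'`. -/
theorem smooth_sylvester (d m : ℕ)
    (U : Set (Fin d → ℝ)) (hU : IsOpen U) (h0U : (0 : Fin d → ℝ) ∈ U)
    (B : (Fin d → ℝ) → Matrix (Fin m) (Fin m) ℝ)
    (hBsm : ∀ i j, ContDiffOn ℝ (⊤ : ℕ∞) (fun x => B x i j) U)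
    (hBsymm : ∀ x ∈ U, (B x).IsSymm)
    (hBdet : ∀ x ∈ U, IsUnit (B x).det) :
    ∃ (U' : Set (Fin d → ℝ)) (A : (Fin d → ℝ) → Matrix (Fin m) (Fin m) ℝ),
      IsOpen U' ∧ (0 : Fin d → ℝ) ∈ U' ∧ U' ⊆ U ∧
      (∀ i j, ContDiffOn ℝ (⊤ : ℕ∞) (fun x => A x i j) U') ∧
      (∀ x ∈ U', IsUnit (A x).det) ∧
      (∀ x ∈ U', B x = (A x)ᵀ * B 0 * A x) := by
  letI : NormedAddCommGroup (Matrix (Fin m) (Fin m) ℝ) := Matrix.linftyOpNormedAddCommGroup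
  letI : NormedRing (Matrix (Fin m) (Fin m) ℝ) := Matrix.linftyOpNormedRing
  letI : NormedAlgebra ℝ (Matrix (Fin m) (Fin m) ℝ) := Matrix.linftyOpNormedAlgebra
  obtain ⟨W, S, g, hWopen, h1W, hSopen, h1S, hg, hgS, hgsq, huniq⟩ :=
    smoothSylvester_exists_sqrt m
  have hB0 : IsUnit (B 0).det := hBdet 0 h0U
  have hB0inv : (B 0)⁻¹ * B 0 = 1 := Matrix.nonsing_inv_mul _ hB0
  have hB0inv' : B 0 * (B 0)⁻¹ = 1 := Matrix.mul_nonsing_inv _ hB0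
  have hB0symm : (B 0)ᵀ = B 0 := hBsymm 0 h0U
  have hB0invT : ((B 0)⁻¹)ᵀ = (B 0)⁻¹ := by
    rw [Matrix.transpose_nonsing_inv, hB0symm]
  set M : (Fin d → ℝ) → Matrix (Fin m) (Fin m) ℝ := fun x => (B 0)⁻¹ * B x with hM_def
  have hM : ContDiffOn ℝ (⊤ : ℕ∞) M U := by
    refine smoothSylvester_contDiffOn_matrix fun i j => ?_
    have : (fun x => M x i j) = fun x => ∑ k, (B 0)⁻¹ i k * B x k j := by
      funext x
      simp [hM_def, Matrix.mul_apply]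
    rw [this]
    exact ContDiffOn.sum fun k _ => (contDiffOn_const).mul (hBsm k j)
  have hM0 : M 0 = 1 := hB0inv
  -- τ is the B0-adjoint
  set τ : Matrix (Fin m) (Fin m) ℝ → Matrix (Fin m) (Fin m) ℝ := fun N => (B 0)⁻¹ * Nᵀ * B 0 with hτ_def
  have hτlin : IsLinearMap ℝ τ := by
    constructor
    · intro N N'; simp [hτ_def, Matrix.transpose_add, Matrix.mul_add, Matrix.add_mul]
    · intro c N; simp [hτ_def, Matrix.transpose_smul, Matrix.mul_smul, Matrix.smul_mul]
  have hτcont : Continuous τ := (IsLinearMap.mk' τ hτlin).continuous_of_finiteDimensional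
  have hτ1 : τ 1 = 1 := by simp [hτ_def, hB0inv]
  -- shrink W so that τ (g z) ∈ S
  set W' : Set (Matrix (Fin m) (Fin m) ℝ) := W ∩ (fun z => τ (g z)) ⁻¹' S with hW'_def
  have hW'open : IsOpen W' :=
    ((hτcont.comp_continuousOn (hg.continuousOn))).isOpen_inter_preimage hWopen hSopen
  have hg1 : g 1 = 1 := (huniq 1 h1S 1 h1W (one_mul 1)).symm
  have h1W' : (1 : Matrix (Fin m) (Fin m) ℝ) ∈ W' := ⟨h1W, by simp [hg1, hτ1, h1S]⟩
  set U' : Set (Fin d → ℝ) := U ∩ M ⁻¹' W' with hU'_def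
  have hU'open : IsOpen U' := hM.continuousOn.isOpen_inter_preimage hU hW'open
  have h0U' : (0 : Fin d → ℝ) ∈ U' := ⟨h0U, by simp only [Set.mem_preimage, hM0]; exact h1W'⟩
  have hU'U : U' ⊆ U := Set.inter_subset_left
  set A : (Fin d → ℝ) → Matrix (Fin m) (Fin m) ℝ := fun x => g (M x) with hA_def
  have hA : ContDiffOn ℝ (⊤ : ℕ∞) A U' := by
    refine hg.comp (hM.mono hU'U) ?_
    intro x hx
    exact hx.2.1
  -- key algebraic facts at each x ∈ U'
  have hkey : ∀ x ∈ U', (A x)ᵀ * B 0 * A x = B x ∧ A x * A x = M x := by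
    intro x hx
    have hxU : x ∈ U := hx.1
    have hMxW : M x ∈ W := hx.2.1
    have hτgS : τ (A x) ∈ S := hx.2.2
    have hAA : A x * A x = M x := hgsq (M x) hMxW
    have hBxsymm : (B x)ᵀ = B x := hBsymm x hxU
    have hcancel : ∀ X : Matrix (Fin m) (Fin m) ℝ, B 0 * ((B 0)⁻¹ * X) = X := by
      intro X
      rw [← Matrix.mul_assoc, hB0inv', Matrix.one_mul]
    have hτM : τ (M x) = M x := by
      simp only [hτ_def, hM_def, Matrix.transpose_mul, hBxsymm, hB0invT, Matrix.mul_assoc]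
      rw [hB0inv, Matrix.mul_one]
    have hττ : τ (A x) * τ (A x) = M x := by
      have h1 : τ (A x) * τ (A x) = τ (A x * A x) := by
        simp only [hτ_def, Matrix.transpose_mul, Matrix.mul_assoc]
        rw [hcancel]
      rw [h1, hAA, hτM]
    have hτA : τ (A x) = A x := huniq (τ (A x)) hτgS (M x) hMxW hττ
    have hATB0 : (A x)ᵀ * B 0 = B 0 * A x := by
      have h := congrArg (fun N => B 0 * N) hτA
      simp only [hτ_def, Matrix.mul_assoc] at h
      rwa [hcancel] at h
    refine ⟨?_, hAA⟩
    calc (A x)ᵀ * B 0 * A x = B 0 * A x * A x := by rw [hATB0]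
      _ = B 0 * M x := by rw [Matrix.mul_assoc, hAA]
      _ = B x := by
          show B 0 * ((B 0)⁻¹ * B x) = B x
          exact hcancel (B x)
  refine ⟨U', A, hU'open, h0U', hU'U, ?_, ?_, ?_⟩
  · intro i j
    exact smoothSylvester_contDiffOn_entry hA i j
  · intro x hx
    have hBx := hBdet x (hU'U hx)
    rw [← (hkey x hx).1, Matrix.det_mul, Matrix.det_mul, Matrix.det_transpose] at hBx
    exact (IsUnit.mul_iff.1 hBx).2
  · intro x hx
    exact ((hkey x hx).1).symm
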